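/- Let 𝒩₁ be a finite multiset of real numbers, 𝒳 a finite set, ρ > 0, c > 0, and suppose for each x ∈ 𝒳 there is β(x) ∈ ℝ with |{γ ∈ 𝒩₁ : ‖(log x / 2π)·γ + β(x)‖ ≤ ρ}| ≥ 2ρ(1+c)|𝒩₁|. Then for every positive integer k, (2ρ)^k (1+c)^k |𝒳|^k |𝒩₁| ≤ Σ_{x₁,…,x_k ∈ 𝒳} sup_{(β₁,…,β_k)∈ℝ^k} |{γ ∈ 𝒩₁ : ‖(log x_j / 2π)·γ + β_j‖ ≤ ρ for all 1 ≤ j ≤ k}|. -/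

import Mathlib

/-- distance to the nearest integer -/
noncomputable def nint (x : ℝ) : ℝ := |x - round x|

open Classical

private lemma list_sum_map_eq (l : List ℝ) (g : ℝ → ℝ) :
    (l.map g).sum = ∑ i : Fin l.length, g (l.get i) := by
  induction l with
  | nil => simp
  | cons a t ih =>
    rw [List.map_cons, List.sum_cons, ih]
    exact (Fin.sum_univ_succ (fun i : Fin (t.length + 1) => g ((a :: t).get i))).symm

private lemma multiset_jensen (m : Multiset ℝ) (g : ℝ → ℝ) (hg : ∀ x, 0 ≤ g x) (n : ℕ) :
    ((m.map g).sum) ^ (n + 1) / (Multiset.card m : ℝ) ^ n ≤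
      (m.map (fun x => g x ^ (n + 1))).sum := by
  obtain ⟨l, rfl⟩ : ∃ l : List ℝ, (l : Multiset ℝ) = m := ⟨m.toList, m.coe_toList⟩
  have h1 : ((l : Multiset ℝ).map g).sum = ∑ i : Fin l.length, g (l.get i) := by
    rw [Multiset.map_coe, Multiset.sum_coe, list_sum_map_eq]
  have h2 : ((l : Multiset ℝ).map (fun x => g x ^ (n + 1))).sum
      = ∑ i : Fin l.length, g (l.get i) ^ (n + 1) := by
    rw [Multiset.map_coe, Multiset.sum_coe, list_sum_map_eq]
  rw [h1, h2]
  have := pow_sum_div_card_le_sum_pow (s := (Finset.univ : Finset (Fin l.length)))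
    (f := fun i => g (l.get i)) (fun i _ => hg _) n
  simpa using this

private lemma card_filter_eq_sum (m : Multiset ℝ) (p : ℝ → Prop) [DecidablePred p] :
    (((m.filter p).card : ℕ) : ℝ) = (m.map (fun γ => if p γ then (1 : ℝ) else 0)).sum := by
  induction m using Multiset.induction with
  | empty => simp
  | cons a s ih =>
    by_cases hp : p a <;> simp [Multiset.filter_cons, hp, ih] <;> ring

private lemma swap_sum {α : Type*} (s : Finset α) (m : Multiset ℝ) (g : α → ℝ → ℝ) :
    ∑ x ∈ s, (m.map (g x)).sum = (m.map (fun γ => ∑ x ∈ s, g x γ)).sum := by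
  induction m using Multiset.induction with
  | empty => simp
  | cons a t ih => simp [Finset.sum_add_distrib, ih]

open Classical in
theorem stmt10 (𝒩 : Multiset ℝ) (𝒳 : Finset ℝ) (ρ c : ℝ) (hρ : 0 < ρ) (hc : 0 < c)
    (B : ℝ → ℝ)
    (h : ∀ x ∈ 𝒳, 2 * ρ * (1 + c) * (Multiset.card 𝒩 : ℝ) ≤
      ((𝒩.filter (fun γ => nint (Real.log x / (2 * Real.pi) * γ + B x) ≤ ρ)).card : ℝ)) :
    ∀ k : ℕ, 0 < k →
      (2 * ρ) ^ k * (1 + c) ^ k * (𝒳.card : ℝ) ^ k * (Multiset.card 𝒩 : ℝ) ≤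
      ∑ xs ∈ Fintype.piFinset (fun _ : Fin k => 𝒳),
        (((⨆ β : Fin k → ℝ,
          (𝒩.filter
            (fun γ => ∀ j, nint (Real.log (xs j) / (2 * Real.pi) * γ + β j) ≤ ρ)).card) : ℕ) : ℝ) := by
  intro k hk
  set P : ℝ → ℝ → Prop := fun x γ => nint (Real.log x / (2 * Real.pi) * γ + B x) ≤ ρ with hPdef
  -- Step 1: bound each iSup from below by choosing β j := B (xs j).
  have step1 : ∀ xs ∈ Fintype.piFinset (fun _ : Fin k => 𝒳),
      (((𝒩.filter (fun γ => ∀ j, P (xs j) γ)).card : ℕ) : ℝ) ≤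
      (((⨆ β : Fin k → ℝ,
          (𝒩.filter
            (fun γ => ∀ j, nint (Real.log (xs j) / (2 * Real.pi) * γ + β j) ≤ ρ)).card) : ℕ) : ℝ) := by
    intro xs _
    have hbdd : BddAbove (Set.range fun β : Fin k → ℝ =>
        (𝒩.filter (fun γ => ∀ j, nint (Real.log (xs j) / (2 * Real.pi) * γ + β j) ≤ ρ)).card) := by
      refine ⟨Multiset.card 𝒩, ?_⟩
      rintro n ⟨β, rfl⟩
      exact Multiset.card_le_card (Multiset.filter_le _ _)
    have := le_ciSup hbdd (fun j => B (xs j))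
    exact_mod_cast this
  refine le_trans ?_ (Finset.sum_le_sum step1)
  -- Step 2: rewrite the sum as a moment sum over 𝒩.
  have key : ∑ xs ∈ Fintype.piFinset (fun _ : Fin k => 𝒳),
      (((𝒩.filter (fun γ => ∀ j, P (xs j) γ)).card : ℕ) : ℝ)
      = (𝒩.map (fun γ => ((𝒳.filter (fun x => P x γ)).card : ℝ) ^ k)).sum := by
    have e1 : ∀ xs : Fin k → ℝ, (((𝒩.filter (fun γ => ∀ j, P (xs j) γ)).card : ℕ) : ℝ)
        = (𝒩.map (fun γ => if ∀ j, P (xs j) γ then (1 : ℝ) else 0)).sum :=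
      fun xs => card_filter_eq_sum _ _
    rw [Finset.sum_congr rfl (fun xs _ => e1 xs), swap_sum]
    refine congrArg _ (Multiset.map_congr rfl ?_)
    intro γ _
    have e2 : ∀ xs : Fin k → ℝ, (if ∀ j, P (xs j) γ then (1 : ℝ) else 0)
        = ∏ j : Fin k, (if P (xs j) γ then (1 : ℝ) else 0) := by
      intro xs
      rw [Finset.prod_boole]
      simp
    rw [Finset.sum_congr rfl (fun xs _ => e2 xs),
      ← Finset.prod_univ_sum (fun _ : Fin k => 𝒳) (fun _ x => if P x γ then (1 : ℝ) else 0)]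
    simp [Finset.sum_boole]
  rw [key]
  -- Step 3: sum the hypothesis over x and swap.
  have hsum : 2 * ρ * (1 + c) * (Multiset.card 𝒩 : ℝ) * (𝒳.card : ℝ) ≤
      (𝒩.map (fun γ => ((𝒳.filter (fun x => P x γ)).card : ℝ))).sum := by
    have e3 : ∀ x : ℝ, (((𝒩.filter (fun γ => P x γ)).card : ℕ) : ℝ)
        = (𝒩.map (fun γ => if P x γ then (1 : ℝ) else 0)).sum :=
      fun x => card_filter_eq_sum _ _
    calc 2 * ρ * (1 + c) * (Multiset.card 𝒩 : ℝ) * (𝒳.card : ℝ)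
        = ∑ _x ∈ 𝒳, 2 * ρ * (1 + c) * (Multiset.card 𝒩 : ℝ) := by
          rw [Finset.sum_const, nsmul_eq_mul]; ring
      _ ≤ ∑ x ∈ 𝒳, (((𝒩.filter (fun γ => P x γ)).card : ℕ) : ℝ) :=
          Finset.sum_le_sum fun x hx => h x hx
      _ = ∑ x ∈ 𝒳, (𝒩.map (fun γ => if P x γ then (1 : ℝ) else 0)).sum :=
          Finset.sum_congr rfl fun x _ => e3 x
      _ = (𝒩.map (fun γ => ∑ x ∈ 𝒳, if P x γ then (1 : ℝ) else 0)).sum := swap_sum _ _ _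
      _ = (𝒩.map (fun γ => ((𝒳.filter (fun x => P x γ)).card : ℝ))).sum := by
          refine congrArg _ (Multiset.map_congr rfl fun γ _ => ?_)
          simp [Finset.sum_boole]
  -- Step 4: Jensen.
  rcases Nat.exists_eq_add_of_lt hk with ⟨n, hn⟩
  have hn' : k = n + 1 := by omega
  subst hn'
  by_cases hN : 𝒩 = 0
  · subst hN; simp
  have hNpos : (0 : ℝ) < (Multiset.card 𝒩 : ℝ) := by
    have := Multiset.card_pos.mpr hN
    exact_mod_cast this
  have hα : (0 : ℝ) ≤ 2 * ρ * (1 + c) * (Multiset.card 𝒩 : ℝ) * (𝒳.card : ℝ) := by positivity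
  have hJ := multiset_jensen 𝒩 (fun γ => ((𝒳.filter (fun x => P x γ)).card : ℝ))
    (fun γ => by positivity) n
  calc (2 * ρ) ^ (n + 1) * (1 + c) ^ (n + 1) * (𝒳.card : ℝ) ^ (n + 1) * (Multiset.card 𝒩 : ℝ)
      = (2 * ρ * (1 + c) * (Multiset.card 𝒩 : ℝ) * (𝒳.card : ℝ)) ^ (n + 1)
        / (Multiset.card 𝒩 : ℝ) ^ n := by
        rw [eq_div_iff (ne_of_gt (pow_pos hNpos n)),
          show (2 * ρ * (1 + c) * (Multiset.card 𝒩 : ℝ) * (𝒳.card : ℝ)) ^ (n + 1)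
            = (2 * ρ) ^ (n + 1) * (1 + c) ^ (n + 1) * (𝒳.card : ℝ) ^ (n + 1)
              * ((Multiset.card 𝒩 : ℝ) ^ n * (Multiset.card 𝒩 : ℝ)) from by
            rw [mul_pow, mul_pow, mul_pow, pow_succ]; ring]
        ring
    _ ≤ ((𝒩.map (fun γ => ((𝒳.filter (fun x => P x γ)).card : ℝ))).sum) ^ (n + 1)
        / (Multiset.card 𝒩 : ℝ) ^ n := by
        gcongr
    _ ≤ (𝒩.map (fun γ => ((𝒳.filter (fun x => P x γ)).card : ℝ) ^ (n + 1))).sum := hJ
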